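/- The quotient of the set of 1-formulas of L_□ by the relation of S5[Con,Ground]-provable equivalence has exactly 1024 elements. -/

import Mathlib

namespace KripkeModal

/-- Formulas of the modal language `L_□`: atoms `T(x)`, `F(x)` for variables
`x : ℕ`, negation, conjunction, and box. -/
inductive Fml : Type
  | tt : ℕ → Fml   -- T(x)
  | ff : ℕ → Fml   -- F(x)
  | neg : Fml → Fml
  | and : Fml → Fml → Fml
  | box : Fml → Fml
deriving DecidableEq

namespace Fml

/-- Material implication, defined from `¬, ∧`. -/
def imp (φ ψ : Fml) : Fml := neg (and φ (neg ψ))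

/-- Disjunction, defined from `¬, ∧`. -/
def or (φ ψ : Fml) : Fml := neg (and (neg φ) (neg ψ))

/-- Biconditional. -/
def iff (φ ψ : Fml) : Fml := and (imp φ ψ) (imp ψ φ)

/-- Diamond: `◇φ := ¬□¬φ`. -/
def dia (φ : Fml) : Fml := neg (box (neg φ))

/-- `N(x) := ¬T(x) ∧ ¬F(x)`. -/
def Nf (x : ℕ) : Fml := and (neg (tt x)) (neg (ff x))

/-- A fixed contradiction. -/
def bot : Fml := and (tt 0) (neg (tt 0))

end Fml

open Fml

/-- Evaluate a formula propositionally under a valuation `v` of the "atoms":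
the atomic formulas `T(x)`, `F(x)` and all boxed formulas are treated as
propositional atoms. -/
def evalProp (v : Fml → Bool) : Fml → Bool
  | Fml.neg φ => !(evalProp v φ)
  | Fml.and φ ψ => evalProp v φ && evalProp v ψ
  | φ => v φ

/-- A formula is a substitution instance of a classical propositional tautology
iff it evaluates to true under every propositional valuation of its atoms. -/
def Tautology (φ : Fml) : Prop := ∀ v : Fml → Bool, evalProp v φ = true

/-- Provability in the modal system `S5[Ax]`: the smallest set of formulas
containing all substitution instances of propositional tautologies, all
instances of K, T and 5, all formulas in `Ax`, closed under modus ponens and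
necessitation.  Taking `Ax = ∅` gives `S5` itself. -/
inductive Prv (Ax : Set Fml) : Fml → Prop
  | taut {φ} : Tautology φ → Prv Ax φ
  | axK (A B : Fml) : Prv Ax (imp (box (imp A B)) (imp (box A) (box B)))
  | axT (A : Fml) : Prv Ax (imp (box A) A)
  | ax5 (A : Fml) : Prv Ax (imp (dia A) (box (dia A)))
  | axm {φ} : φ ∈ Ax → Prv Ax φ
  | mp {A B} : Prv Ax (imp A B) → Prv Ax A → Prv Ax B
  | nec {A} : Prv Ax A → Prv Ax (box A)

/-- A system is consistent if it does not prove a contradiction. -/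
def Consistent (Ax : Set Fml) : Prop := ¬ Prv Ax Fml.bot

/-- The axiom schema `Con`: `¬(T(x) ∧ F(x))`. -/
def ConAx : Set Fml := { φ | ∃ x : ℕ, φ = neg (and (tt x) (ff x)) }

/-- The axiom schema `Ground`: `(◇T(x) ∧ ◇F(x)) → ◇N(x)`. -/
def GroundAx : Set Fml :=
  { φ | ∃ x : ℕ, φ = imp (and (dia (tt x)) (dia (ff x))) (dia (Nf x)) }

/-- Conjunction of a list of formulas (empty conjunction is `¬⊥`). -/
def bigAnd : List Fml → Fml
  | [] => Fml.neg Fml.bot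
  | [φ] => φ
  | φ :: ψ :: rest => Fml.and φ (bigAnd (ψ :: rest))

/-- Disjunction of a list of formulas (the empty disjunction is the fixed
contradiction `⊥`). -/
def bigOr : List Fml → Fml
  | [] => Fml.bot
  | [φ] => φ
  | φ :: ψ :: rest => Fml.or φ (bigOr (ψ :: rest))

/-- The axiom schema `Min_n`: all instances
`(◇N(x_1) ∧ … ∧ ◇N(x_n)) → ◇(N(x_1) ∧ … ∧ N(x_n))` obtained by substituting
arbitrary (not necessarily distinct) variables for `x_1, …, x_n`. -/
def MinAx (n : ℕ) : Set Fml :=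
  { φ | ∃ l : List ℕ, l.length = n ∧
      φ = imp (bigAnd (l.map (fun x => dia (Nf x)))) (dia (bigAnd (l.map Nf))) }

/-- A formula is extensional if it contains no `□`. -/
def Extensional : Fml → Prop
  | tt _ => True
  | ff _ => True
  | Fml.neg φ => Extensional φ
  | Fml.and φ ψ => Extensional φ ∧ Extensional ψ
  | box _ => False

/-- A formula is intensional if every atomic subformula occurs within the
scope of a `□`. -/
def Intensional : Fml → Prop
  | tt _ => False
  | ff _ => False
  | Fml.neg φ => Intensional φ
  | Fml.and φ ψ => Intensional φ ∧ Intensional ψ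
  | box _ => True

/-- The set of variables occurring in a formula. -/
def vars : Fml → Set ℕ
  | tt x => {x}
  | ff x => {x}
  | Fml.neg φ => vars φ
  | Fml.and φ ψ => vars φ ∪ vars ψ
  | box φ => vars φ

/-- An `n`-formula: one whose atoms use only the variables `x_1, …, x_n`. -/
def IsNFormula (n : ℕ) (φ : Fml) : Prop := vars φ ⊆ {x | 1 ≤ x ∧ x ≤ n}

/-- A 1-formula: one whose atoms use only the single variable `x_1`. -/
abbrev Is1Formula (φ : Fml) : Prop := IsNFormula 1 φ

/-- `φ` is `Γ`-maximal for the system `S5[Ax]`. -/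
def GammaMaximal (Ax : Set Fml) (Γ : Set Fml) (φ : Fml) : Prop :=
  Consistent (Ax ∪ {φ}) ∧ φ ∈ Γ ∧
    ∀ ψ ∈ Γ, Prv Ax (imp φ ψ) ∨ Prv Ax (imp φ (neg ψ))

/-- Extensional `n`-isolators for `S5[Ax]`. -/
def ExtIsolator (n : ℕ) (Ax : Set Fml) (φ : Fml) : Prop :=
  GammaMaximal Ax {ψ | Extensional ψ ∧ IsNFormula n ψ} φ

/-- Intensional `n`-isolators for `S5[Ax]`. -/
def IntIsolator (n : ℕ) (Ax : Set Fml) (φ : Fml) : Prop :=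
  GammaMaximal Ax {ψ | Intensional ψ ∧ IsNFormula n ψ} φ

/-- An `n`-isolator for `S5[Ax]`: a consistent conjunction `ε ∧ ι` of an
extensional `n`-isolator and an intensional `n`-isolator. -/
def Isolator (n : ℕ) (Ax : Set Fml) (φ : Fml) : Prop :=
  ∃ ε ι, ExtIsolator n Ax ε ∧ IntIsolator n Ax ι ∧
    φ = Fml.and ε ι ∧ Consistent (Ax ∪ {φ})

/-- Satisfaction in a model `(W, V)` (with `V = (V1, V2)`) at a world `w`. -/
def Sat {W : Type*} (V1 V2 : ℕ → Set W) : W → Fml → Prop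
  | w, tt x => w ∈ V1 x
  | w, ff x => w ∈ V2 x
  | w, Fml.neg φ => ¬ Sat V1 V2 w φ
  | w, Fml.and φ ψ => Sat V1 V2 w φ ∧ Sat V1 V2 w ψ
  | _, box φ => ∀ v, Sat V1 V2 v φ

/-- The variable assignment satisfies the `Con` constraint. -/
def ConC {W : Type*} (V1 V2 : ℕ → Set W) : Prop := ∀ x, V1 x ∩ V2 x = ∅

/-- The variable assignment satisfies the `Ground` constraint. -/
def GroundC {W : Type*} (V1 V2 : ℕ → Set W) : Prop :=
  ∀ x, (V1 x).Nonempty → (V2 x).Nonempty → ((V1 x ∪ V2 x)ᶜ : Set W).Nonempty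

/-- The variable assignment satisfies the `Min` constraint. -/
def MinC {W : Type*} (V1 V2 : ℕ → Set W) : Prop :=
  ∀ l : List ℕ, l ≠ [] → (∀ x ∈ l, ((V1 x ∪ V2 x)ᶜ : Set W).Nonempty) →
    (⋂ x ∈ l, ((V1 x ∪ V2 x)ᶜ : Set W)).Nonempty

/-- The prime conditions for a subset `S` of the tensor `[3]^n`, realized as
`Fin n → Fin 3` where the value `0` stands for the layer `T`, `1` for `F`,
and `2` for `N` (i.e. `1, 2, 3` in the paper's numbering). -/
def PrimeConditions (n : ℕ) (S : Set (Fin n → Fin 3)) : Prop :=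
  S.Nonempty ∧
  (∀ j : Fin n, (S ∩ {a | a j = 0}).Nonempty → (S ∩ {a | a j = 1}).Nonempty →
      (S ∩ {a | a j = 2}).Nonempty) ∧
  ∀ J : Set (Fin n), J.Nonempty →
    (∀ j ∈ J, (S ∩ {a | a j = 2}).Nonempty) →
    (S ∩ ⋂ j ∈ J, {a | a j = 2}).Nonempty

/-- `χ_1 = T`, `χ_2 = F`, `χ_3 = N` (with `Fin 3` values `0, 1, 2`). -/
def chi (k : Fin 3) (x : ℕ) : Fml :=
  if k = 0 then tt x else if k = 1 then ff x else Nf x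

/-- The extensional `n`-isolator `φ_a = χ_{a_1}(x_1) ∧ … ∧ χ_{a_n}(x_n)`
associated with a tuple `a ∈ [3]^n`. -/
def tupleFml {n : ℕ} (a : Fin n → Fin 3) : Fml :=
  bigAnd ((List.finRange n).map (fun i => chi (a i) (i.1 + 1)))

open Classical in
/-- The pre-`n`-isolator of `S ⊆ [3]^n`:
`⋀_{a ∈ S} ◇φ_a ∧ ⋀_{a ∉ S} ¬◇φ_a`. -/
noncomputable def preIsolator (n : ℕ) (S : Set (Fin n → Fin 3)) : Fml :=
  bigAnd (((Finset.univ : Finset (Fin n → Fin 3)).toList).map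
    (fun a => if a ∈ S then dia (tupleFml a) else Fml.neg (dia (tupleFml a))))


/-! ### Auxiliary development -/

section Aux

/-- Propositional skeletons with `n` atoms. -/
inductive PF (n : ℕ) : Type
  | atom : Fin n → PF n
  | neg : PF n → PF n
  | and : PF n → PF n → PF n

namespace PF

def pimp {n} (p q : PF n) : PF n := .neg (.and p (.neg q))
def por {n} (p q : PF n) : PF n := .neg (.and (.neg p) (.neg q))
def piff {n} (p q : PF n) : PF n := .and (pimp p q) (pimp q p)

def peval {n} (w : Fin n → Bool) : PF n → Bool
  | .atom i => w i
  | .neg p => !peval w p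
  | .and p q => peval w p && peval w q

def psub {n} (σ : Fin n → Fml) : PF n → Fml
  | .atom i => σ i
  | .neg p => .neg (psub σ p)
  | .and p q => .and (psub σ p) (psub σ q)

end PF

lemma evalProp_psub {n} (v : Fml → Bool) (σ : Fin n → Fml) :
    ∀ p : PF n, evalProp v (PF.psub σ p) = PF.peval (fun i => evalProp v (σ i)) p
  | .atom i => rfl
  | .neg p => by
      simp only [PF.psub, PF.peval, evalProp, evalProp_psub v σ p]
  | .and p q => by
      simp only [PF.psub, PF.peval, evalProp, evalProp_psub v σ p, evalProp_psub v σ q]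

lemma prv_ptaut {Ax : Set Fml} {n} (p : PF n) (hp : ∀ w : Fin n → Bool, PF.peval w p = true)
    (σ : Fin n → Fml) : Prv Ax (PF.psub σ p) :=
  Prv.taut (fun v => by rw [evalProp_psub]; exact hp _)

open PF in
lemma prv_imp_trans {Ax : Set Fml} {A B C : Fml}
    (h1 : Prv Ax (imp A B)) (h2 : Prv Ax (imp B C)) : Prv Ax (imp A C) :=
  Prv.mp (Prv.mp (prv_ptaut (n := 3)
    (pimp (pimp (.atom 0) (.atom 1)) (pimp (pimp (.atom 1) (.atom 2)) (pimp (.atom 0) (.atom 2))))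
    (by decide) ![A, B, C]) h1) h2

open PF in
lemma prv_and_intro {Ax : Set Fml} {A B : Fml}
    (h1 : Prv Ax A) (h2 : Prv Ax B) : Prv Ax (Fml.and A B) :=
  Prv.mp (Prv.mp (prv_ptaut (n := 2)
    (pimp (.atom 0) (pimp (.atom 1) (.and (.atom 0) (.atom 1)))) (by decide) ![A, B]) h1) h2

open PF in
lemma prv_imp_and {Ax : Set Fml} {D A B : Fml}
    (h1 : Prv Ax (imp D A)) (h2 : Prv Ax (imp D B)) : Prv Ax (imp D (Fml.and A B)) :=
  Prv.mp (Prv.mp (prv_ptaut (n := 3)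
    (pimp (pimp (.atom 0) (.atom 1)) (pimp (pimp (.atom 0) (.atom 2))
      (pimp (.atom 0) (.and (.atom 1) (.atom 2))))) (by decide) ![D, A, B]) h1) h2

open PF in
lemma prv_contrap {Ax : Set Fml} {A B : Fml}
    (h : Prv Ax (imp A B)) : Prv Ax (imp (Fml.neg B) (Fml.neg A)) :=
  Prv.mp (prv_ptaut (n := 2)
    (pimp (pimp (.atom 0) (.atom 1)) (pimp (.neg (.atom 1)) (.neg (.atom 0))))
    (by decide) ![A, B]) h

/-- From `⊢ A → B`, infer `⊢ □A → □B`. -/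
lemma prv_mono {Ax : Set Fml} {A B : Fml}
    (h : Prv Ax (imp A B)) : Prv Ax (imp (box A) (box B)) :=
  Prv.mp (Prv.axK A B) (Prv.nec h)

open PF in
/-- `⊢ A → ◇A`. -/
lemma prv_dual1 {Ax : Set Fml} (A : Fml) : Prv Ax (imp A (dia A)) :=
  Prv.mp (prv_ptaut (n := 2)
    (pimp (pimp (.atom 1) (.neg (.atom 0))) (pimp (.atom 0) (.neg (.atom 1))))
    (by decide) ![A, box (Fml.neg A)]) (Prv.axT (Fml.neg A))

open PF in
/-- From `⊢ A → B`, infer `⊢ ◇A → ◇B`. -/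
lemma prv_dia_mono {Ax : Set Fml} {A B : Fml}
    (h : Prv Ax (imp A B)) : Prv Ax (imp (dia A) (dia B)) :=
  prv_contrap (prv_mono (prv_contrap h))

open PF in
/-- `⊢ □A ∧ □B → □(A ∧ B)`. -/
lemma prv_box_and {Ax : Set Fml} (A B : Fml) :
    Prv Ax (imp (Fml.and (box A) (box B)) (box (Fml.and A B))) := by
  have h1 : Prv Ax (imp (box A) (box (imp B (Fml.and A B)))) :=
    prv_mono (prv_ptaut (n := 2)
      (pimp (.atom 0) (pimp (.atom 1) (.and (.atom 0) (.atom 1)))) (by decide) ![A, B])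
  have h2 : Prv Ax (imp (box (imp B (Fml.and A B))) (imp (box B) (box (Fml.and A B)))) :=
    Prv.axK B (Fml.and A B)
  have h3 : Prv Ax (imp (box A) (imp (box B) (box (Fml.and A B)))) := prv_imp_trans h1 h2
  exact Prv.mp (prv_ptaut (n := 3)
    (pimp (pimp (.atom 0) (pimp (.atom 1) (.atom 2)))
      (pimp (.and (.atom 0) (.atom 1)) (.atom 2))) (by decide)
    ![box A, box B, box (Fml.and A B)]) h3

open PF in
/-- `⊢ ¬□A → □¬□A` (a form of axiom 5 for the negated box). -/
lemma prv_negbox {Ax : Set Fml} (A : Fml) :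
    Prv Ax (imp (Fml.neg (box A)) (box (Fml.neg (box A)))) := by
  -- ¬□A → ◇¬A
  have s1 : Prv Ax (imp (Fml.neg (box A)) (dia (Fml.neg A))) := by
    have m : Prv Ax (imp (box (Fml.neg (Fml.neg A))) (box A)) :=
      prv_mono (prv_ptaut (n := 1) (pimp (.neg (.neg (.atom 0))) (.atom 0)) (by decide) ![A])
    exact Prv.mp (prv_ptaut (n := 2)
      (pimp (pimp (.atom 0) (.atom 1)) (pimp (.neg (.atom 1)) (.neg (.atom 0))))
      (by decide) ![box (Fml.neg (Fml.neg A)), box A]) m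
  -- ◇¬A → □◇¬A
  have s2 : Prv Ax (imp (dia (Fml.neg A)) (box (dia (Fml.neg A)))) := Prv.ax5 (Fml.neg A)
  -- □◇¬A → □¬□A
  have s3 : Prv Ax (imp (box (dia (Fml.neg A))) (box (Fml.neg (box A)))) := by
    apply prv_mono
    have m : Prv Ax (imp (box A) (box (Fml.neg (Fml.neg A)))) :=
      prv_mono (prv_ptaut (n := 1) (pimp (.atom 0) (.neg (.neg (.atom 0)))) (by decide) ![A])
    exact Prv.mp (prv_ptaut (n := 2)
      (pimp (pimp (.atom 0) (.atom 1)) (pimp (.neg (.atom 1)) (.neg (.atom 0))))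
      (by decide) ![box A, box (Fml.neg (Fml.neg A))]) m
  exact prv_imp_trans s1 (prv_imp_trans s2 s3)

open PF in
/-- `⊢ ◇□A → □A`. -/
lemma prv_E {Ax : Set Fml} (A : Fml) : Prv Ax (imp (dia (box A)) (box A)) := by
  have h := prv_negbox (Ax := Ax) A
  -- (¬□A → □¬□A) → (¬□¬□A → □A)
  exact Prv.mp (prv_ptaut (n := 2)
    (pimp (pimp (.neg (.atom 0)) (.atom 1)) (pimp (.neg (.atom 1)) (.atom 0)))
    (by decide) ![box A, box (Fml.neg (box A))]) h

/-- Axiom 4: `⊢ □A → □□A`. -/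
lemma prv_4 {Ax : Set Fml} (A : Fml) : Prv Ax (imp (box A) (box (box A))) := by
  have h1 : Prv Ax (imp (box A) (dia (box A))) := prv_dual1 (box A)
  have h2 : Prv Ax (imp (dia (box A)) (box (dia (box A)))) := Prv.ax5 (box A)
  have h3 : Prv Ax (imp (box (dia (box A))) (box (box A))) := prv_mono (prv_E A)
  exact prv_imp_trans h1 (prv_imp_trans h2 h3)

open PF in
/-- `⊢ ¬◇A → □¬◇A`. -/
lemma prv_notdia_box {Ax : Set Fml} (A : Fml) :
    Prv Ax (imp (Fml.neg (dia A)) (box (Fml.neg (dia A)))) := by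
  have s1 : Prv Ax (imp (Fml.neg (dia A)) (box (Fml.neg A))) :=
    prv_ptaut (n := 1) (pimp (.neg (.neg (.atom 0))) (.atom 0)) (by decide) ![box (Fml.neg A)]
  have s2 : Prv Ax (imp (box (Fml.neg A)) (box (box (Fml.neg A)))) := prv_4 (Fml.neg A)
  have s3 : Prv Ax (imp (box (box (Fml.neg A))) (box (Fml.neg (dia A)))) :=
    prv_mono (prv_ptaut (n := 1) (pimp (.atom 0) (.neg (.neg (.atom 0)))) (by decide)
      ![box (Fml.neg A)])
  exact prv_imp_trans s1 (prv_imp_trans s2 s3)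

open PF in
/-- `⊢ □B ∧ ◇A → ◇(A ∧ B)`. -/
lemma prv_box_dia_and {Ax : Set Fml} (A B : Fml) :
    Prv Ax (imp (Fml.and (box B) (dia A)) (dia (Fml.and A B))) := by
  have h1 : Prv Ax (imp B (imp (Fml.neg (Fml.and A B)) (Fml.neg A))) :=
    prv_ptaut (n := 2)
      (pimp (.atom 1) (pimp (.neg (.and (.atom 0) (.atom 1))) (.neg (.atom 0))))
      (by decide) ![A, B]
  have h2 : Prv Ax (imp (box B) (imp (box (Fml.neg (Fml.and A B))) (box (Fml.neg A)))) :=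
    prv_imp_trans (prv_mono h1) (Prv.axK (Fml.neg (Fml.and A B)) (Fml.neg A))
  exact Prv.mp (prv_ptaut (n := 3)
    (pimp (pimp (.atom 0) (pimp (.atom 1) (.atom 2)))
      (pimp (.and (.atom 0) (.neg (.atom 2))) (.neg (.atom 1)))) (by decide)
    ![box B, box (Fml.neg (Fml.and A B)), box (Fml.neg A)]) h2

open PF in
/-- `⊢ ◇¬A → ¬□A`. -/
lemma prv_dia_neg {Ax : Set Fml} (A : Fml) :
    Prv Ax (imp (dia (Fml.neg A)) (Fml.neg (box A))) := by
  have m : Prv Ax (imp (box A) (box (Fml.neg (Fml.neg A)))) :=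
    prv_mono (prv_ptaut (n := 1) (pimp (.atom 0) (.neg (.neg (.atom 0)))) (by decide) ![A])
  exact Prv.mp (prv_ptaut (n := 2)
    (pimp (pimp (.atom 0) (.atom 1)) (pimp (.neg (.atom 1)) (.neg (.atom 0))))
    (by decide) ![box A, box (Fml.neg (Fml.neg A))]) m

end Aux


section Sem

/-- Boolean semantics in the canonical small models: worlds are `Fin 3`
(`0 ↦ T`, `1 ↦ F`, `2 ↦ N` for the variable `x₁`), `S` is the set of
realized worlds. -/
def semB (S : Fin 3 → Bool) : Fml → Fin 3 → Bool
  | .tt x, w => decide (x = 1 ∧ w = 0)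
  | .ff x, w => decide (x = 1 ∧ w = 1)
  | .neg φ, w => !(semB S φ w)
  | .and φ ψ, w => semB S φ w && semB S ψ w
  | .box φ, _ => decide (∀ a, S a = true → semB S φ a = true)

def ValidS (S : Fin 3 → Bool) : Prop := S 0 = true → S 1 = true → S 2 = true

lemma evalProp_semB (S : Fin 3 → Bool) (w : Fin 3) :
    ∀ φ, evalProp (fun ψ => semB S ψ w) φ = semB S φ w
  | .tt _ => rfl
  | .ff _ => rfl
  | .box _ => rfl
  | .neg φ => by simp only [evalProp, semB, evalProp_semB S w φ]
  | .and φ ψ => by simp only [evalProp, semB, evalProp_semB S w φ, evalProp_semB S w ψ]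

lemma semB_imp_true {S : Fin 3 → Bool} {A B : Fml} {w : Fin 3} :
    semB S (imp A B) w = true ↔ (semB S A w = true → semB S B w = true) := by
  show (!(semB S A w && !(semB S B w))) = true ↔ _
  cases h1 : semB S A w <;> cases h2 : semB S B w <;> simp

lemma semB_box_true {S : Fin 3 → Bool} {A : Fml} {w : Fin 3} :
    semB S (Fml.box A) w = true ↔ ∀ a, S a = true → semB S A a = true := by
  show decide _ = true ↔ _
  simp

lemma semB_dia_true {S : Fin 3 → Bool} {A : Fml} {w : Fin 3} :
    semB S (dia A) w = true ↔ ∃ a, S a = true ∧ semB S A a = true := by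
  show (!(decide (∀ a, S a = true → (!(semB S A a)) = true))) = true ↔ _
  simp

lemma semB_and_true {S : Fin 3 → Bool} {A B : Fml} {w : Fin 3} :
    semB S (Fml.and A B) w = true ↔ semB S A w = true ∧ semB S B w = true := by
  show (semB S A w && semB S B w) = true ↔ _
  simp

lemma semB_neg_true {S : Fin 3 → Bool} {A : Fml} {w : Fin 3} :
    semB S (Fml.neg A) w = true ↔ ¬ (semB S A w = true) := by
  show (!(semB S A w)) = true ↔ _
  simp

/-- Soundness of `S5[Con, Ground]` for the canonical small models. -/
theorem prv_sound {φ : Fml} (h : Prv (ConAx ∪ GroundAx) φ) :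
    ∀ S : Fin 3 → Bool, ValidS S → ∀ w, S w = true → semB S φ w = true := by
  induction h with
  | @taut φ h =>
      intro S _ w _
      rw [← evalProp_semB S w φ]; exact h _
  | axK A B =>
      intro S _ w _
      rw [semB_imp_true, semB_imp_true]
      intro h1 h2
      rw [semB_box_true] at *
      intro a ha
      exact semB_imp_true.mp (h1 a ha) (h2 a ha)
  | axT A =>
      intro S _ w hw
      rw [semB_imp_true, semB_box_true]
      intro h1; exact h1 w hw
  | ax5 A =>
      intro S _ w _
      rw [semB_imp_true]
      intro h1
      rw [semB_box_true]
      intro a _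
      rw [semB_dia_true] at *
      exact h1
  | @axm φ hm =>
      intro S hS w hw
      rcases hm with ⟨x, rfl⟩ | ⟨x, rfl⟩
      · rw [semB_neg_true, semB_and_true]
        rintro ⟨h1, h2⟩
        have e1 : x = 1 ∧ w = 0 := by simpa [semB] using h1
        have e2 : x = 1 ∧ w = 1 := by simpa [semB] using h2
        rw [e1.2] at e2; exact absurd e2.2 (by decide)
      · rw [semB_imp_true, semB_and_true]
        rintro ⟨h1, h2⟩
        rw [semB_dia_true] at h1 h2 ⊢
        obtain ⟨a, ha, hTa⟩ := h1
        obtain ⟨b, hb, hFb⟩ := h2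
        have e1 : x = 1 ∧ a = 0 := by simpa [semB] using hTa
        have e2 : x = 1 ∧ b = 1 := by simpa [semB] using hFb
        refine ⟨2, hS (e1.2 ▸ ha) (e2.2 ▸ hb), ?_⟩
        simp [Nf, semB, e1.1]
  | mp h1 h2 ih1 ih2 =>
      intro S hS w hw
      exact semB_imp_true.mp (ih1 S hS w hw) (ih2 S hS w hw)
  | nec h ih =>
      intro S hS w hw
      rw [semB_box_true]
      intro a ha
      exact ih S hS a ha

lemma semB_iff_eq {S : Fin 3 → Bool} {A B : Fml} {w : Fin 3}
    (h : semB S (Fml.iff A B) w = true) : semB S A w = semB S B w := by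
  rw [Fml.iff, semB_and_true, semB_imp_true, semB_imp_true] at h
  cases h1 : semB S A w <;> cases h2 : semB S B w <;> simp_all

end Sem


section NF

def diaM (a : Fin 3) : Fml := dia (chi a 1)
def litM (S : Fin 3 → Bool) (a : Fin 3) : Fml := if S a then diaM a else Fml.neg (diaM a)
def isoM (S : Fin 3 → Bool) : Fml := Fml.and (litM S 0) (Fml.and (litM S 1) (litM S 2))
def dM (S : Fin 3 → Bool) (w : Fin 3) : Fml := Fml.and (chi w 1) (isoM S)

open PF in
lemma prv_iso_lit {Ax : Set Fml} (S : Fin 3 → Bool) (a : Fin 3) :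
    Prv Ax (imp (isoM S) (litM S a)) := by
  fin_cases a
  · exact prv_ptaut (n := 3) (pimp (.and (.atom 0) (.and (.atom 1) (.atom 2))) (.atom 0))
      (by decide) ![litM S 0, litM S 1, litM S 2]
  · exact prv_ptaut (n := 3) (pimp (.and (.atom 0) (.and (.atom 1) (.atom 2))) (.atom 1))
      (by decide) ![litM S 0, litM S 1, litM S 2]
  · exact prv_ptaut (n := 3) (pimp (.and (.atom 0) (.and (.atom 1) (.atom 2))) (.atom 2))
      (by decide) ![litM S 0, litM S 1, litM S 2]

lemma prv_lit_selfbox {Ax : Set Fml} (S : Fin 3 → Bool) (a : Fin 3) :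
    Prv Ax (imp (litM S a) (box (litM S a))) := by
  cases hSa : S a
  · rw [litM, hSa]; simpa [diaM] using prv_notdia_box (Ax := Ax) (chi a 1)
  · rw [litM, hSa]; simpa [diaM] using Prv.ax5 (Ax := Ax) (chi a 1)

open PF in
lemma prv_selfbox_and {Ax : Set Fml} {A B : Fml}
    (h1 : Prv Ax (imp A (box A))) (h2 : Prv Ax (imp B (box B))) :
    Prv Ax (imp (Fml.and A B) (box (Fml.and A B))) := by
  have hab : Prv Ax (imp (Fml.and A B) (Fml.and (box A) (box B))) :=
    Prv.mp (Prv.mp (prv_ptaut (n := 4)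
      (pimp (pimp (.atom 0) (.atom 2)) (pimp (pimp (.atom 1) (.atom 3))
        (pimp (.and (.atom 0) (.atom 1)) (.and (.atom 2) (.atom 3))))) (by decide)
      ![A, B, box A, box B]) h1) h2
  exact prv_imp_trans hab (prv_box_and A B)

lemma prv_iso_selfbox {Ax : Set Fml} (S : Fin 3 → Bool) :
    Prv Ax (imp (isoM S) (box (isoM S))) :=
  prv_selfbox_and (prv_lit_selfbox S 0) (prv_selfbox_and (prv_lit_selfbox S 1) (prv_lit_selfbox S 2))

open PF in
lemma prv_dM_iso {Ax : Set Fml} (S : Fin 3 → Bool) (w : Fin 3) :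
    Prv Ax (imp (dM S w) (isoM S)) :=
  prv_ptaut (n := 2) (pimp (.and (.atom 0) (.atom 1)) (.atom 1)) (by decide)
    ![chi w 1, isoM S]

open PF in
/-- The normal-form theorem: each `dM S w` decides every 1-formula. -/
theorem nf2 : ∀ φ : Fml, Is1Formula φ → ∀ S : Fin 3 → Bool, ValidS S → ∀ w, S w = true →
    (semB S φ w = true → Prv (ConAx ∪ GroundAx) (imp (dM S w) φ)) ∧
    (semB S φ w = false → Prv (ConAx ∪ GroundAx) (imp (dM S w) (Fml.neg φ))) := by
  intro φ
  induction φ with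
  | tt x =>
      intro h1 S hS w hw
      have hx : x = 1 := by
        obtain ⟨hl, hr⟩ := h1 (Set.mem_singleton x); omega
      subst hx
      constructor
      · intro ht
        have hw0 : w = 0 := by simpa [semB] using ht
        subst hw0
        exact prv_ptaut (n := 2) (pimp (.and (.atom 0) (.atom 1)) (.atom 0)) (by decide)
          ![Fml.tt 1, isoM S]
      · intro hf
        have hCon : Prv (ConAx ∪ GroundAx) (Fml.neg (Fml.and (Fml.tt 1) (Fml.ff 1))) :=
          Prv.axm (Or.inl ⟨1, rfl⟩)
        fin_cases w
        · simp [semB] at hf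
        · exact Prv.mp (prv_ptaut (n := 3)
            (pimp (.neg (.and (.atom 0) (.atom 1)))
              (pimp (.and (.atom 1) (.atom 2)) (.neg (.atom 0)))) (by decide)
            ![Fml.tt 1, Fml.ff 1, isoM S]) hCon
        · exact prv_ptaut (n := 3)
            (pimp (.and (.and (.neg (.atom 0)) (.neg (.atom 1))) (.atom 2)) (.neg (.atom 0)))
            (by decide) ![Fml.tt 1, Fml.ff 1, isoM S]
  | ff x =>
      intro h1 S hS w hw
      have hx : x = 1 := by
        obtain ⟨hl, hr⟩ := h1 (Set.mem_singleton x); omega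
      subst hx
      constructor
      · intro ht
        have hw1 : w = 1 := by simpa [semB] using ht
        subst hw1
        exact prv_ptaut (n := 2) (pimp (.and (.atom 0) (.atom 1)) (.atom 0)) (by decide)
          ![Fml.ff 1, isoM S]
      · intro hf
        have hCon : Prv (ConAx ∪ GroundAx) (Fml.neg (Fml.and (Fml.tt 1) (Fml.ff 1))) :=
          Prv.axm (Or.inl ⟨1, rfl⟩)
        fin_cases w
        · exact Prv.mp (prv_ptaut (n := 3)
            (pimp (.neg (.and (.atom 0) (.atom 1)))
              (pimp (.and (.atom 0) (.atom 2)) (.neg (.atom 1)))) (by decide)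
            ![Fml.tt 1, Fml.ff 1, isoM S]) hCon
        · simp [semB] at hf
        · exact prv_ptaut (n := 3)
            (pimp (.and (.and (.neg (.atom 0)) (.neg (.atom 1))) (.atom 2)) (.neg (.atom 1)))
            (by decide) ![Fml.tt 1, Fml.ff 1, isoM S]
  | neg φ ih =>
      intro h1 S hS w hw
      have ihh := ih h1 S hS w hw
      constructor
      · intro ht
        have hx : semB S φ w = false := by
          have : (!(semB S φ w)) = true := ht
          simpa using this
        exact ihh.2 hx
      · intro hf
        have hx : semB S φ w = true := by
          have : (!(semB S φ w)) = false := hf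
          simpa using this
        exact prv_imp_trans (ihh.1 hx)
          (prv_ptaut (n := 1) (pimp (.atom 0) (.neg (.neg (.atom 0)))) (by decide) ![φ])
  | and φ ψ ihφ ihψ =>
      intro h1 S hS w hw
      have hφ : Is1Formula φ := fun y hy => h1 (Set.mem_union_left _ hy)
      have hψ : Is1Formula ψ := fun y hy => h1 (Set.mem_union_right _ hy)
      have ih1 := ihφ hφ S hS w hw
      have ih2 := ihψ hψ S hS w hw
      constructor
      · intro ht
        have hx : semB S φ w = true ∧ semB S ψ w = true := semB_and_true.mp ht
        exact prv_imp_and (ih1.1 hx.1) (ih2.1 hx.2)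
      · intro hf
        have hx : semB S φ w = false ∨ semB S ψ w = false := by
          have : (semB S φ w && semB S ψ w) = false := hf
          rcases Bool.and_eq_false_iff.mp this with h | h
          · exact Or.inl h
          · exact Or.inr h
        rcases hx with h | h
        · exact Prv.mp (prv_ptaut (n := 3)
            (pimp (pimp (.atom 0) (.neg (.atom 1)))
              (pimp (.atom 0) (.neg (.and (.atom 1) (.atom 2))))) (by decide)
            ![dM S w, φ, ψ]) (ih1.2 h)
        · exact Prv.mp (prv_ptaut (n := 3)
            (pimp (pimp (.atom 0) (.neg (.atom 2)))
              (pimp (.atom 0) (.neg (.and (.atom 1) (.atom 2))))) (by decide)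
            ![dM S w, φ, ψ]) (ih2.2 h)
  | box φ ih =>
      intro h1 S hS w hw
      constructor
      · intro ht
        have hall : ∀ a, S a = true → semB S φ a = true := semB_box_true.mp ht
        -- case lemma: for each world-type a, `χ_a ∧ iso → φ`
        have hcase : ∀ a : Fin 3, Prv (ConAx ∪ GroundAx) (imp (Fml.and (chi a 1) (isoM S)) φ) := by
          intro a
          cases hSa : S a
          · have hli : Prv (ConAx ∪ GroundAx) (imp (isoM S) (Fml.neg (diaM a))) := by
              have h := prv_iso_lit (Ax := ConAx ∪ GroundAx) S a
              rw [litM, hSa] at h; simpa using h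
            have hl2 : Prv (ConAx ∪ GroundAx) (imp (chi a 1) (diaM a)) := prv_dual1 _
            exact Prv.mp (Prv.mp (prv_ptaut (n := 4)
              (pimp (pimp (.atom 0) (.atom 1))
                (pimp (pimp (.atom 2) (.neg (.atom 1)))
                  (pimp (.and (.atom 0) (.atom 2)) (.atom 3)))) (by decide)
              ![chi a 1, diaM a, isoM S, φ]) hl2) hli
          · exact (ih h1 S hS a hSa).1 (hall a hSa)
        have hC : Prv (ConAx ∪ GroundAx)
            (imp (Fml.and (isoM S) (Fml.or (chi 0 1) (Fml.or (chi 1 1) (chi 2 1)))) φ) := by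
          exact Prv.mp (Prv.mp (Prv.mp (prv_ptaut (n := 5)
            (pimp (pimp (.and (.atom 0) (.atom 3)) (.atom 4))
              (pimp (pimp (.and (.atom 1) (.atom 3)) (.atom 4))
                (pimp (pimp (.and (.atom 2) (.atom 3)) (.atom 4))
                  (pimp (.and (.atom 3) (por (.atom 0) (por (.atom 1) (.atom 2)))) (.atom 4)))))
            (by decide) ![chi 0 1, chi 1 1, chi 2 1, isoM S, φ]) (hcase 0)) (hcase 1)) (hcase 2)
        have hbtriv : Prv (ConAx ∪ GroundAx) (box (Fml.or (chi 0 1) (Fml.or (chi 1 1) (chi 2 1)))) :=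
          Prv.nec (prv_ptaut (n := 2)
            (por (.atom 0) (por (.atom 1) (.and (.neg (.atom 0)) (.neg (.atom 1)))))
            (by decide) ![Fml.tt 1, Fml.ff 1])
        have hdbox : Prv (ConAx ∪ GroundAx)
            (imp (dM S w) (box (Fml.and (isoM S) (Fml.or (chi 0 1) (Fml.or (chi 1 1) (chi 2 1)))))) := by
          have hdi : Prv (ConAx ∪ GroundAx) (imp (dM S w) (box (isoM S))) :=
            prv_imp_trans (prv_dM_iso S w) (prv_iso_selfbox S)
          have hba := prv_box_and (Ax := ConAx ∪ GroundAx) (isoM S)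
            (Fml.or (chi 0 1) (Fml.or (chi 1 1) (chi 2 1)))
          exact Prv.mp (Prv.mp (Prv.mp (prv_ptaut (n := 4)
            (pimp (pimp (.atom 0) (.atom 1)) (pimp (.atom 2)
              (pimp (pimp (.and (.atom 1) (.atom 2)) (.atom 3)) (pimp (.atom 0) (.atom 3)))))
            (by decide)
            ![dM S w, box (isoM S), box (Fml.or (chi 0 1) (Fml.or (chi 1 1) (chi 2 1))),
              box (Fml.and (isoM S) (Fml.or (chi 0 1) (Fml.or (chi 1 1) (chi 2 1))))])
            hdi) hbtriv) hba
        exact prv_imp_trans hdbox (prv_mono hC)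
      · intro hf
        have hex : ∃ a, S a = true ∧ semB S φ a = false := by
          by_contra hc
          push_neg at hc
          have : semB S (Fml.box φ) w = true := by
            rw [semB_box_true]
            intro a ha
            cases h : semB S φ a
            · exact absurd h (hc a ha)
            · rfl
          rw [this] at hf; exact absurd hf (by decide)
        obtain ⟨a, ha, hfa⟩ := hex
        have ihn : Prv (ConAx ∪ GroundAx) (imp (dM S a) (Fml.neg φ)) := (ih h1 S hS a ha).2 hfa
        have d1 : Prv (ConAx ∪ GroundAx) (imp (dM S w) (diaM a)) := by
          have hli := prv_iso_lit (Ax := ConAx ∪ GroundAx) S a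
          rw [litM, ha] at hli
          exact prv_imp_trans (prv_dM_iso S w) (by simpa using hli)
        have d2 : Prv (ConAx ∪ GroundAx) (imp (dM S w) (box (isoM S))) :=
          prv_imp_trans (prv_dM_iso S w) (prv_iso_selfbox S)
        have d12 : Prv (ConAx ∪ GroundAx) (imp (dM S w) (Fml.and (box (isoM S)) (diaM a))) :=
          prv_imp_and d2 d1
        have d3 := prv_box_dia_and (Ax := ConAx ∪ GroundAx) (chi a 1) (isoM S)
        have d4 : Prv (ConAx ∪ GroundAx)
            (imp (dia (Fml.and (chi a 1) (isoM S))) (dia (Fml.neg φ))) := prv_dia_mono ihn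
        have d5 := prv_dia_neg (Ax := ConAx ∪ GroundAx) φ
        exact prv_imp_trans d12 (prv_imp_trans d3 (prv_imp_trans d4 d5))

end NF


section Count

/-- The ten canonical pointed models `(S, w)`. -/
def mS : Fin 10 → Fin 3 → Bool :=
  ![![true,false,false], ![false,true,false], ![false,false,true],
    ![true,false,true], ![true,false,true], ![false,true,true], ![false,true,true],
    ![true,true,true], ![true,true,true], ![true,true,true]]

def mw : Fin 10 → Fin 3 := ![0, 1, 2, 0, 2, 1, 2, 0, 1, 2]

instance ValidS.dec (S : Fin 3 → Bool) : Decidable (ValidS S) := by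
  unfold ValidS; infer_instance

lemma mvalid : ∀ i : Fin 10, ValidS (mS i) ∧ mS i (mw i) = true := by decide

/- Mirrors of the δ-formulas in `PF 5`; atoms: `0 ↦ T(x₁)`, `1 ↦ F(x₁)`,
`2 ↦ □¬T(x₁)`, `3 ↦ □¬F(x₁)`, `4 ↦ □¬N(x₁)`. -/
def sig5 : Fin 5 → Fml :=
  ![Fml.tt 1, Fml.ff 1, Fml.box (Fml.neg (Fml.tt 1)), Fml.box (Fml.neg (Fml.ff 1)),
    Fml.box (Fml.neg (Nf 1))]

def pb5 : Fin 3 → PF 5 := ![.atom 2, .atom 3, .atom 4]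
def pchi5 (w : Fin 3) : PF 5 :=
  if w = 0 then .atom 0 else if w = 1 then .atom 1 else .and (.neg (.atom 0)) (.neg (.atom 1))
def pdia5 (a : Fin 3) : PF 5 := .neg (pb5 a)
def plit5 (S : Fin 3 → Bool) (a : Fin 3) : PF 5 := if S a then pdia5 a else .neg (pdia5 a)
def piso5 (S : Fin 3 → Bool) : PF 5 := .and (plit5 S 0) (.and (plit5 S 1) (plit5 S 2))
def pdM5 (S : Fin 3 → Bool) (w : Fin 3) : PF 5 := .and (pchi5 w) (piso5 S)

open PF in
def covP : PF 5 :=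
  pimp (.neg (.and (.atom 0) (.atom 1)))
  (pimp (pimp (.and (pdia5 0) (pdia5 1)) (pdia5 2))
  (pimp (pimp (pchi5 0) (pdia5 0))
  (pimp (pimp (pchi5 1) (pdia5 1))
  (pimp (pimp (pchi5 2) (pdia5 2))
  (por (pdM5 (mS 0) (mw 0)) (por (pdM5 (mS 1) (mw 1)) (por (pdM5 (mS 2) (mw 2))
  (por (pdM5 (mS 3) (mw 3)) (por (pdM5 (mS 4) (mw 4)) (por (pdM5 (mS 5) (mw 5))
  (por (pdM5 (mS 6) (mw 6)) (por (pdM5 (mS 7) (mw 7)) (por (pdM5 (mS 8) (mw 8))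
  (pdM5 (mS 9) (mw 9)))))))))))))))

/-- Covering: the ten δ-formulas provably exhaust all possibilities. -/
lemma cover : Prv (ConAx ∪ GroundAx)
    (Fml.or (dM (mS 0) (mw 0)) (Fml.or (dM (mS 1) (mw 1)) (Fml.or (dM (mS 2) (mw 2))
     (Fml.or (dM (mS 3) (mw 3)) (Fml.or (dM (mS 4) (mw 4)) (Fml.or (dM (mS 5) (mw 5))
     (Fml.or (dM (mS 6) (mw 6)) (Fml.or (dM (mS 7) (mw 7)) (Fml.or (dM (mS 8) (mw 8))
     (dM (mS 9) (mw 9))))))))))) := by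
  have hCon : Prv (ConAx ∪ GroundAx) (Fml.neg (Fml.and (Fml.tt 1) (Fml.ff 1))) :=
    Prv.axm (Or.inl ⟨1, rfl⟩)
  have hGround : Prv (ConAx ∪ GroundAx)
      (imp (Fml.and (dia (Fml.tt 1)) (dia (Fml.ff 1))) (dia (Nf 1))) :=
    Prv.axm (Or.inr ⟨1, rfl⟩)
  have hL0 : Prv (ConAx ∪ GroundAx) (imp (chi 0 1) (dia (chi 0 1))) := prv_dual1 _
  have hL1 : Prv (ConAx ∪ GroundAx) (imp (chi 1 1) (dia (chi 1 1))) := prv_dual1 _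
  have hL2 : Prv (ConAx ∪ GroundAx) (imp (chi 2 1) (dia (chi 2 1))) := prv_dual1 _
  exact Prv.mp (Prv.mp (Prv.mp (Prv.mp (Prv.mp
    (prv_ptaut covP (by decide) sig5) hCon) hGround) hL0) hL1) hL2

open PF in
lemma prv_or_elim {Ax : Set Fml} {A B C : Fml}
    (h1 : Prv Ax (imp A C)) (h2 : Prv Ax (imp B C)) : Prv Ax (imp (Fml.or A B) C) :=
  Prv.mp (Prv.mp (prv_ptaut (n := 3)
    (pimp (pimp (.atom 0) (.atom 2)) (pimp (pimp (.atom 1) (.atom 2))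
      (pimp (por (.atom 0) (.atom 1)) (.atom 2)))) (by decide) ![A, B, C]) h1) h2

open PF in
/-- Completeness: 1-formulas agreeing on the ten canonical models are provably
equivalent. -/
theorem complete (φ ψ : Fml) (hφ : Is1Formula φ) (hψ : Is1Formula ψ)
    (h : ∀ i : Fin 10, semB (mS i) φ (mw i) = semB (mS i) ψ (mw i)) :
    Prv (ConAx ∪ GroundAx) (Fml.iff φ ψ) := by
  have dEq : ∀ i : Fin 10, Prv (ConAx ∪ GroundAx) (imp (dM (mS i) (mw i)) (Fml.iff φ ψ)) := by
    intro i
    obtain ⟨hvi, hwi⟩ := mvalid i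
    have nφ := nf2 φ hφ (mS i) hvi (mw i) hwi
    have nψ := nf2 ψ hψ (mS i) hvi (mw i) hwi
    cases hb : semB (mS i) φ (mw i)
    · have e2 : semB (mS i) ψ (mw i) = false := by rw [← h i]; exact hb
      exact Prv.mp (Prv.mp (prv_ptaut (n := 3)
        (pimp (pimp (.atom 0) (.neg (.atom 1))) (pimp (pimp (.atom 0) (.neg (.atom 2)))
          (pimp (.atom 0) (piff (.atom 1) (.atom 2))))) (by decide)
        ![dM (mS i) (mw i), φ, ψ]) (nφ.2 hb)) (nψ.2 e2)
    · have e2 : semB (mS i) ψ (mw i) = true := by rw [← h i]; exact hb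
      exact Prv.mp (Prv.mp (prv_ptaut (n := 3)
        (pimp (pimp (.atom 0) (.atom 1)) (pimp (pimp (.atom 0) (.atom 2))
          (pimp (.atom 0) (piff (.atom 1) (.atom 2))))) (by decide)
        ![dM (mS i) (mw i), φ, ψ]) (nφ.1 hb)) (nψ.1 e2)
  exact Prv.mp
    (prv_or_elim (dEq 0) (prv_or_elim (dEq 1) (prv_or_elim (dEq 2) (prv_or_elim (dEq 3)
      (prv_or_elim (dEq 4) (prv_or_elim (dEq 5) (prv_or_elim (dEq 6) (prv_or_elim (dEq 7)
        (prv_or_elim (dEq 8) (dEq 9)))))))))) cover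

end Count


section Final

lemma semB_or {S : Fin 3 → Bool} {A B : Fml} {w : Fin 3} :
    semB S (Fml.or A B) w = (semB S A w || semB S B w) := by
  show (!((!semB S A w) && (!semB S B w))) = _
  cases semB S A w <;> cases semB S B w <;> rfl

lemma semB_bigOr (S : Fin 3 → Bool) (w : Fin 3) :
    ∀ l : List Fml, semB S (bigOr l) w = l.any (fun ψ => semB S ψ w)
  | [] => by
      show semB S Fml.bot w = false
      show (semB S (Fml.tt 0) w && !(semB S (Fml.tt 0) w)) = false
      cases semB S (Fml.tt 0) w <;> rfl
  | [φ] => by simp [bigOr]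
  | φ :: ψ :: rest => by
      rw [show bigOr (φ :: ψ :: rest) = Fml.or φ (bigOr (ψ :: rest)) from rfl,
        semB_or, semB_bigOr S w (ψ :: rest)]
      simp

lemma semB_dM_eq : ∀ i j : Fin 10, semB (mS i) (dM (mS j) (mw j)) (mw i) = decide (j = i) := by
  decide

/-- `1`-formula-hood of all the ingredients. -/
lemma is1_and {A B : Fml} (hA : Is1Formula A) (hB : Is1Formula B) :
    Is1Formula (Fml.and A B) := Set.union_subset hA hB

lemma is1_or {A B : Fml} (hA : Is1Formula A) (hB : Is1Formula B) :
    Is1Formula (Fml.or A B) := Set.union_subset hA hB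

lemma is1_tt1 : Is1Formula (Fml.tt 1) := by
  intro y hy
  rw [Set.mem_singleton_iff.mp hy]
  exact ⟨le_refl 1, le_refl 1⟩

lemma is1_ff1 : Is1Formula (Fml.ff 1) := by
  intro y hy
  rw [Set.mem_singleton_iff.mp hy]
  exact ⟨le_refl 1, le_refl 1⟩

lemma is1_chi (a : Fin 3) : Is1Formula (chi a 1) := by
  fin_cases a
  · exact is1_tt1
  · exact is1_ff1
  · exact is1_and is1_tt1 is1_ff1

lemma is1_dia {A : Fml} (hA : Is1Formula A) : Is1Formula (dia A) := hA

lemma is1_lit (S : Fin 3 → Bool) (a : Fin 3) : Is1Formula (litM S a) := by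
  cases hSa : S a <;> rw [litM, hSa] <;> simp <;> exact is1_dia (is1_chi a)

lemma is1_dM (S : Fin 3 → Bool) (w : Fin 3) : Is1Formula (dM S w) :=
  is1_and (is1_chi w) (is1_and (is1_lit S 0) (is1_and (is1_lit S 1) (is1_lit S 2)))

lemma is1_bigOr : ∀ (A : Fml) (l : List Fml), Is1Formula A → (∀ B ∈ l, Is1Formula B) →
    Is1Formula (bigOr (A :: l))
  | A, [], hA, _ => hA
  | A, B :: l, hA, hl =>
      is1_or hA (is1_bigOr B l (hl B List.mem_cons_self)
        (fun C hC => hl C (List.mem_cons_of_mem B hC)))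

/-- The formula realizing a given profile `f` on the ten canonical models. -/
def PhiF (f : Fin 10 → Bool) : Fml :=
  bigOr (Fml.and (Fml.tt 1) (Fml.neg (Fml.tt 1)) ::
    ((List.finRange 10).filter (fun i => f i)).map (fun i => dM (mS i) (mw i)))

lemma is1_PhiF (f : Fin 10 → Bool) : Is1Formula (PhiF f) := by
  apply is1_bigOr
  · exact is1_and is1_tt1 is1_tt1
  · intro B hB
    simp only [List.mem_map] at hB
    obtain ⟨j, _, rfl⟩ := hB
    exact is1_dM _ _

lemma semB_PhiF (f : Fin 10 → Bool) (i : Fin 10) : semB (mS i) (PhiF f) (mw i) = f i := by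
  rw [PhiF, semB_bigOr]
  rw [List.any_cons]
  have h0 : semB (mS i) (Fml.and (Fml.tt 1) (Fml.neg (Fml.tt 1))) (mw i) = false := by
    show (semB (mS i) (Fml.tt 1) (mw i) && !(semB (mS i) (Fml.tt 1) (mw i))) = false
    cases semB (mS i) (Fml.tt 1) (mw i) <;> rfl
  rw [h0]
  rw [Bool.false_or]
  cases hf : f i
  · rw [List.any_eq_false]
    intro ψ hψ
    simp only [List.mem_map, List.mem_filter, List.mem_finRange, true_and] at hψ
    obtain ⟨j, hfj, rfl⟩ := hψ
    rw [semB_dM_eq i j]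
    simp only [decide_eq_true_eq]
    rintro rfl
    rw [hf] at hfj
    exact absurd hfj (by decide)
  · rw [List.any_eq_true]
    refine ⟨dM (mS i) (mw i), ?_, ?_⟩
    · exact List.mem_map.mpr ⟨i, List.mem_filter.mpr ⟨List.mem_finRange i, hf⟩, rfl⟩
    · rw [semB_dM_eq i i]; simp

end Final


/-- up to S5[Con,Ground]-provable equivalence there are exactly
`1024` one-variable formulas. -/
theorem count_one_formulas_S5ConGround :
    Nat.card (Quot (fun φ ψ : {f : Fml // Is1Formula f} =>
      Prv (ConAx ∪ GroundAx) (Fml.iff φ.1 ψ.1))) = 1024 := by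
  have hresp : ∀ φ ψ : {f : Fml // Is1Formula f},
      Prv (ConAx ∪ GroundAx) (Fml.iff φ.1 ψ.1) →
      (fun i => semB (mS i) φ.1 (mw i)) = (fun i : Fin 10 => semB (mS i) ψ.1 (mw i)) := by
    intro φ ψ h
    funext i
    obtain ⟨hvi, hwi⟩ := mvalid i
    exact semB_iff_eq (prv_sound h (mS i) hvi (mw i) hwi)
  let F : Quot (fun φ ψ : {f : Fml // Is1Formula f} =>
      Prv (ConAx ∪ GroundAx) (Fml.iff φ.1 ψ.1)) → (Fin 10 → Bool) :=
    Quot.lift (fun φ => fun i => semB (mS i) φ.1 (mw i)) hresp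
  have hbij : Function.Bijective F := by
    constructor
    · intro q1 q2
      induction q1 using Quot.ind with | _ φ =>
      induction q2 using Quot.ind with | _ ψ =>
      intro h
      exact Quot.sound (complete φ.1 ψ.1 φ.2 ψ.2 (fun i => congrFun h i))
    · intro f
      exact ⟨Quot.mk _ ⟨PhiF f, is1_PhiF f⟩, funext (fun i => semB_PhiF f i)⟩
  rw [Nat.card_eq_of_bijective F hbij]
  rw [Nat.card_eq_fintype_card, Fintype.card_fun]
  norm_num

end KripkeModal
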